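/- Let β be an algebraic integer of degree n ≥ 5 over ℚ with conjugates β_1, …, β_n, and suppose Gal(ℚ(β_1,…,β_n)/ℚ) = 𝔄_n. Let a_1, …, a_n ∈ ℤ and suppose that α = a_1β_1 + ⋯ + a_nβ_n generates ℚ(β_1,…,β_n) over ℚ. Then h(α) ≤ log(M(β)·∑_{i=1}^n |a_i|). -/

import Mathlib

open Polynomial

/-- The primitive integer minimal polynomial of an algebraic number `γ`. -/
noncomputable def intMinPoly (γ : ℂ) : Polynomial ℤ :=
  (IsLocalization.integerNormalization (nonZeroDivisors ℤ) (minpoly ℚ γ)).primPart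

/-- The Mahler measure `M(γ) = |a| ∏ max(1,|γᵢ|)`. -/
noncomputable def mahlerM (γ : ℂ) : ℝ :=
  ((intMinPoly γ).leadingCoeff.natAbs : ℝ) *
    (((minpoly ℚ γ).aroots ℂ).map (fun z => max 1 ‖z‖)).prod

/-- The logarithmic Weil height `h(γ) = log M(γ) / deg γ`. -/
noncomputable def heightH (γ : ℂ) : ℝ :=
  Real.log (mahlerM γ) / (minpoly ℚ γ).natDegree

/-- The image of the permutation representation of the Galois group of the splitting
field on the roots `B 0, …, B (n-1)`. -/
def galoisImage (n : ℕ) (B : Fin n → ℂ) : Set (Equiv.Perm (Fin n)) :=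
  {τ | ∃ σ : ℂ ≃ₐ[ℚ] ℂ, ∀ i, σ (B i) = B (τ i)}

lemma intMinPoly_lc {γ : ℂ} (h : IsIntegral ℤ γ) :
    (intMinPoly γ).leadingCoeff.natAbs = 1 := by
  have hq : minpoly ℚ γ = (minpoly ℤ γ).map (algebraMap ℤ ℚ) :=
    minpoly.isIntegrallyClosed_eq_field_fractions' ℚ h
  obtain ⟨b, hb⟩ := IsLocalization.integerNormalization_map_to_map (nonZeroDivisors ℤ) (minpoly ℚ γ)
  set p := IsLocalization.integerNormalization (nonZeroDivisors ℤ) (minpoly ℚ γ) with hpdef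
  have hinj : Function.Injective (algebraMap ℤ ℚ) := fun x y hxy => by exact_mod_cast hxy
  have hp : p = C (b : ℤ) * minpoly ℤ γ := by
    apply Polynomial.map_injective _ hinj
    rw [hb, hq, Polynomial.map_mul, map_C, ← Polynomial.smul_eq_C_mul, algebraMap_smul]
  have hb0 : (b : ℤ) ≠ 0 := nonZeroDivisors.coe_ne_zero b
  have hmon : (minpoly ℤ γ).Monic := minpoly.monic h
  have hcont : p.content = normalize (b : ℤ) := by
    rw [hp, Polynomial.content_C_mul, hmon.isPrimitive.content_eq_one, mul_one]
  have hlcp : p.leadingCoeff = (b : ℤ) := by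
    rw [hp, leadingCoeff_mul, leadingCoeff_C, hmon.leadingCoeff, mul_one]
  have heq := p.eq_C_content_mul_primPart
  have hkey : p.leadingCoeff = p.content * p.primPart.leadingCoeff := by
    conv_lhs => rw [heq]
    rw [leadingCoeff_mul, leadingCoeff_C]
  rw [hlcp, hcont] at hkey
  have hkey2 := congrArg Int.natAbs hkey
  rw [Int.natAbs_mul] at hkey2
  have hnb : (normalize (b:ℤ)).natAbs = (b:ℤ).natAbs := by
    rw [← Int.abs_eq_normalize, Int.natAbs_abs]
  rw [hnb] at hkey2
  have hna : (b:ℤ).natAbs ≠ 0 := Int.natAbs_ne_zero.mpr hb0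
  exact (Nat.mul_eq_left hna).mp hkey2.symm

lemma aux_prod_le {c : ℝ} (hc : 1 ≤ c) :
    ∀ {s : Multiset ℝ}, (∀ x ∈ s, 1 ≤ x ∧ x ≤ c) →
      1 ≤ s.prod ∧ s.prod ≤ c ^ (Multiset.card s) := by
  intro s
  induction s using Multiset.induction with
  | empty => intro _; simp
  | cons a s ih =>
    intro hx
    obtain ⟨ha1, hac⟩ := hx a (Multiset.mem_cons_self a s)
    obtain ⟨hs1, hsc⟩ := ih (fun x hxs => hx x (Multiset.mem_cons_of_mem hxs))
    constructor
    · rw [Multiset.prod_cons]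
      calc (1:ℝ) = 1 * 1 := by ring
        _ ≤ a * s.prod := mul_le_mul ha1 hs1 zero_le_one (le_trans zero_le_one ha1)
    · rw [Multiset.prod_cons, Multiset.card_cons, pow_succ, mul_comm (c ^ _) c]
      exact mul_le_mul hac hsc (le_trans zero_le_one hs1) (le_trans zero_le_one hc)

lemma one_le_prod_real {ι : Type*} (s : Finset ι) (f : ι → ℝ) (h : ∀ i ∈ s, 1 ≤ f i) :
    1 ≤ ∏ i ∈ s, f i := by
  calc (1:ℝ) = ∏ _i ∈ s, 1 := by simp
  _ ≤ ∏ i ∈ s, f i := Finset.prod_le_prod (fun i _ => zero_le_one) h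

lemma single_le_prod_real {ι : Type*} [DecidableEq ι] (s : Finset ι) (f : ι → ℝ) (h : ∀ i ∈ s, 1 ≤ f i)
    {j : ι} (hj : j ∈ s) : f j ≤ ∏ i ∈ s, f i := by
  rw [← Finset.mul_prod_erase s f hj]
  nth_rewrite 1 [← mul_one (f j)]
  exact mul_le_mul_of_nonneg_left
    (one_le_prod_real _ _ fun i hi => h i (Finset.mem_of_mem_erase hi))
    (le_trans zero_le_one (h j hj))

theorem stmt_16 (n : ℕ) (hn : 5 ≤ n) (b : ℂ) (B : Fin n → ℂ)
    (hbint : IsIntegral ℤ b)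
    (hdeg : (minpoly ℚ b).natDegree = n)
    (hroots : (minpoly ℚ b).aroots ℂ = Multiset.map B Finset.univ.val)
    (hgal : galoisImage n B = (alternatingGroup (Fin n) : Set (Equiv.Perm (Fin n))))
    (a : Fin n → ℤ) (α : ℂ) (hα : α = ∑ i, (a i : ℂ) * B i)
    (hgen : IntermediateField.adjoin ℚ {α} = IntermediateField.adjoin ℚ (Set.range B)) :
    heightH α ≤ Real.log (mahlerM b * ∑ i, |(a i : ℝ)|) := by
  classical
  have hbQ : IsIntegral ℚ b := hbint.tower_top
  have hq0 : minpoly ℚ b ≠ 0 := minpoly.ne_zero hbQ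
  have hBroot : ∀ i, (aeval (B i)) (minpoly ℚ b) = 0 := by
    intro i
    have hmem : B i ∈ (minpoly ℚ b).aroots ℂ := by
      rw [hroots]
      exact Multiset.mem_map_of_mem B (Finset.mem_univ_val i)
    exact (Polynomial.mem_aroots.mp hmem).2
  have hqmap : minpoly ℚ b = (minpoly ℤ b).map (algebraMap ℤ ℚ) :=
    minpoly.isIntegrallyClosed_eq_field_fractions' ℚ hbint
  have hBint : ∀ i, IsIntegral ℤ (B i) := by
    intro i
    refine ⟨minpoly ℤ b, minpoly.monic hbint, ?_⟩
    have h0 := hBroot i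
    rw [hqmap, Polynomial.aeval_map_algebraMap] at h0
    exact h0
  have hαint : IsIntegral ℤ α := by
    rw [hα]
    refine IsIntegral.sum _ (fun i _ => ?_)
    exact (isIntegral_algebraMap (x := a i)).mul (hBint i)
  have hαQ : IsIntegral ℚ α := hαint.tower_top
  have hpα0 : minpoly ℚ α ≠ 0 := minpoly.ne_zero hαQ
  have hd : 0 < (minpoly ℚ α).natDegree := minpoly.natDegree_pos hαQ
  set d := (minpoly ℚ α).natDegree with hddef
  set P := ∏ i, max 1 ‖B i‖ with hPdef
  have hP1 : 1 ≤ P := one_le_prod_real _ _ fun i _ => le_max_left _ _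
  set S := ∑ i, |(a i : ℝ)| with hSdef
  have hMb : mahlerM b = P := by
    rw [mahlerM, intMinPoly_lc hbint, hroots, Multiset.map_map]
    simp only [Nat.cast_one, one_mul]
    rfl
  -- S ≥ 1
  have hS1 : (1 : ℝ) ≤ S := by
    by_contra hS
    have hz : ∀ i, a i = 0 := by
      intro i
      by_contra hai
      have h1 : (1:ℝ) ≤ |(a i : ℝ)| := by
        have := Int.one_le_abs (by exact_mod_cast hai : a i ≠ 0)
        exact_mod_cast this
      exact hS (le_trans h1 (Finset.single_le_sum (fun j _ => abs_nonneg ((a j : ℝ))) (Finset.mem_univ i)))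
    have hα0 : α = 0 := by simp [hα, hz]
    have hbmem : b ∈ Set.range B := by
      have hmem : b ∈ (minpoly ℚ b).aroots ℂ :=
        Polynomial.mem_aroots.mpr ⟨hq0, minpoly.aeval ℚ b⟩
      rw [hroots] at hmem
      obtain ⟨i, _, hi⟩ := Multiset.mem_map.mp hmem
      exact ⟨i, hi⟩
    have hb2 : b ∈ IntermediateField.adjoin ℚ (Set.range B) :=
      IntermediateField.subset_adjoin ℚ _ hbmem
    rw [← hgen, hα0] at hb2
    have hbot : IntermediateField.adjoin ℚ ({(0:ℂ)} : Set ℂ) ≤ ⊥ := by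
      rw [IntermediateField.adjoin_le_iff]
      intro x hx
      rw [Set.mem_singleton_iff] at hx
      subst hx
      exact zero_mem ⊥
    obtain ⟨q, hqb⟩ := IntermediateField.mem_bot.mp (hbot hb2)
    have hdeg1 : (minpoly ℚ b).natDegree = 1 := by
      rw [← hqb, minpoly.eq_X_sub_C, natDegree_X_sub_C]
    omega
  have hPS1 : (1 : ℝ) ≤ P * S := by
    calc (1:ℝ) = 1 * 1 := by ring
    _ ≤ P * S := mul_le_mul hP1 hS1 zero_le_one (le_trans zero_le_one hP1)
  -- bound on the roots of minpoly α
  have hbound : ∀ z ∈ (minpoly ℚ α).aroots ℂ, max 1 ‖z‖ ≤ P * S := by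
    intro z hz
    refine max_le hPS1 ?_
    set ψ := (IntermediateField.algHomAdjoinIntegralEquiv ℚ hαQ).symm ⟨z, hz⟩ with hψdef
    have hψgen : ψ (IntermediateField.AdjoinSimple.gen ℚ α) = z :=
      IntermediateField.algHomAdjoinIntegralEquiv_symm_apply_gen ℚ hαQ ⟨z, hz⟩
    have hBmem : ∀ i, B i ∈ IntermediateField.adjoin ℚ ({α} : Set ℂ) := by
      intro i
      rw [hgen]
      exact IntermediateField.subset_adjoin ℚ _ ⟨i, rfl⟩
    have hψB : ∀ i, ∃ j, ψ ⟨B i, hBmem i⟩ = B j := by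
      intro i
      have h0 : (aeval (⟨B i, hBmem i⟩ : IntermediateField.adjoin ℚ ({α} : Set ℂ))) (minpoly ℚ b) = 0 := by
        have h1 : ((aeval (⟨B i, hBmem i⟩ : IntermediateField.adjoin ℚ ({α} : Set ℂ))) (minpoly ℚ b) : ℂ) = aeval (B i) (minpoly ℚ b) :=
          (Polynomial.aeval_algebraMap_apply ℂ (⟨B i, hBmem i⟩ : IntermediateField.adjoin ℚ ({α} : Set ℂ)) (minpoly ℚ b)).symm
        exact_mod_cast h1.trans (hBroot i)
      have hmem : ψ ⟨B i, hBmem i⟩ ∈ (minpoly ℚ b).aroots ℂ := by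
        refine Polynomial.mem_aroots.mpr ⟨hq0, ?_⟩
        rw [Polynomial.aeval_algHom_apply, h0, map_zero]
      rw [hroots] at hmem
      obtain ⟨j, _, hj⟩ := Multiset.mem_map.mp hmem
      exact ⟨j, hj.symm⟩
    choose j hj using hψB
    have hgeq : IntermediateField.AdjoinSimple.gen ℚ α = ∑ i, (a i : ℤ) • (⟨B i, hBmem i⟩ : IntermediateField.adjoin ℚ ({α} : Set ℂ)) := by
      apply Subtype.ext
      show α = ((∑ i, (a i : ℤ) • (⟨B i, hBmem i⟩ : IntermediateField.adjoin ℚ ({α} : Set ℂ)) : IntermediateField.adjoin ℚ ({α} : Set ℂ)) : ℂ)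
      rw [AddSubmonoidClass.coe_finset_sum]
      conv_lhs => rw [hα]
      refine Finset.sum_congr rfl (fun i _ => ?_)
      push_cast
      rw [zsmul_eq_mul]
    have hz2 : z = ∑ i, (a i : ℂ) * B (j i) := by
      rw [← hψgen, hgeq, map_sum]
      refine Finset.sum_congr rfl (fun i _ => ?_)
      rw [map_zsmul, hj i, zsmul_eq_mul]
    rw [hz2]
    calc ‖∑ i, (a i : ℂ) * B (j i)‖ ≤ ∑ i, ‖(a i : ℂ) * B (j i)‖ :=
          norm_sum_le _ _
    _ = ∑ i, |(a i : ℝ)| * ‖B (j i)‖ := by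
          refine Finset.sum_congr rfl (fun i _ => ?_)
          rw [norm_mul, Complex.norm_intCast]
    _ ≤ ∑ i, |(a i : ℝ)| * P := by
          refine Finset.sum_le_sum (fun i _ => ?_)
          refine mul_le_mul_of_nonneg_left ?_ (abs_nonneg _)
          exact le_trans (le_max_right 1 _)
            (single_le_prod_real Finset.univ (fun k => max 1 ‖B k‖)
              (fun k _ => le_max_left _ _) (Finset.mem_univ (j i)))
    _ = S * P := by rw [← Finset.sum_mul]
    _ = P * S := mul_comm _ _
  -- assemble
  have hcard : Multiset.card ((minpoly ℚ α).aroots ℂ) = d :=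
    (by have := (IsAlgClosed.splits ((minpoly ℚ α).map (algebraMap ℚ ℂ))).natDegree_eq_card_roots; rw [natDegree_map] at this; exact this.symm)
  have hprod := aux_prod_le hPS1 (s := ((minpoly ℚ α).aroots ℂ).map fun z => max 1 ‖z‖)
    (by
      intro x hx
      obtain ⟨z, hz, rfl⟩ := Multiset.mem_map.mp hx
      exact ⟨le_max_left _ _, hbound z hz⟩)
  rw [Multiset.card_map, hcard] at hprod
  obtain ⟨hM1, hMle⟩ := hprod
  have hMα : mahlerM α = (((minpoly ℚ α).aroots ℂ).map fun z => max 1 ‖z‖).prod := by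
    rw [mahlerM, intMinPoly_lc hαint]
    simp
  rw [heightH, hMb, hMα, ← hddef]
  rw [div_le_iff₀ (by exact_mod_cast hd)]
  calc Real.log ((((minpoly ℚ α).aroots ℂ).map fun z => max 1 ‖z‖).prod)
      ≤ Real.log ((P * S) ^ d) := Real.log_le_log (lt_of_lt_of_le zero_lt_one hM1) hMle
    _ = d * Real.log (P * S) := by rw [Real.log_pow]
    _ = Real.log (P * S) * d := mul_comm _ _
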